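/- Fix a real y with 1 ≤ y ≤ 3, and for each integer d ≥ 2 set q_d = y·(log d)/d and λ_d = q_d·(1 - (1-q_d)^{d-1}) / (1-q_d)^d. Then lim_{d→∞} λ_d / (d^{y-1}·y·log d) = 1. -/

import Mathlib

open Filter Real

lemma logsq_div_tendsto : Tendsto (fun d : ℕ => (Real.log d) ^ 2 / d) atTop (nhds 0) := by
  have := (Real.tendsto_pow_log_div_mul_add_atTop 1 0 2 one_ne_zero).comp
    (tendsto_natCast_atTop_atTop (R := ℝ))
  simpa [Function.comp_def] using this

lemma log_div_tendsto : Tendsto (fun d : ℕ => (Real.log d) / d) atTop (nhds 0) := by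
  have := (Real.tendsto_pow_log_div_mul_add_atTop 1 0 1 one_ne_zero).comp
    (tendsto_natCast_atTop_atTop (R := ℝ))
  simpa [Function.comp_def] using this

lemma q_small (y : ℝ) (hy1 : 1 ≤ y) (hy3 : y ≤ 3) :
    ∀ᶠ d : ℕ in atTop, 0 ≤ y * Real.log d / d ∧ y * Real.log d / d ≤ 1/2 := by
  have h6 : ∀ᶠ d : ℕ in atTop, Real.log d / d ≤ 1/6 :=
    log_div_tendsto.eventually_le_const (by norm_num)
  filter_upwards [h6, eventually_ge_atTop 1] with d hd6 hd1
  have hdpos : (0:ℝ) < d := by exact_mod_cast hd1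
  have hlog : 0 ≤ Real.log d := Real.log_natCast_nonneg d
  have hldd : 0 ≤ Real.log d / d := div_nonneg hlog hdpos.le
  constructor
  · rw [mul_div_assoc]; positivity
  · rw [mul_div_assoc]
    calc y * (Real.log d / d) ≤ 3 * (1/6) :=
          mul_le_mul hy3 hd6 hldd (by norm_num)
      _ ≤ 1/2 := by norm_num

lemma exponent_tendsto (y : ℝ) (hy1 : 1 ≤ y) (hy3 : y ≤ 3) :
    Tendsto (fun d : ℕ => y * Real.log d + d * Real.log (1 - y * Real.log d / d))
      atTop (nhds 0) := by
  apply tendsto_of_tendsto_of_tendsto_of_le_of_le'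
    (g := fun d : ℕ => -(2 * y^2) * ((Real.log d)^2 / d)) (h := fun _ => (0:ℝ))
  · simpa using logsq_div_tendsto.const_mul (-(2 * y^2))
  · exact tendsto_const_nhds
  · filter_upwards [q_small y hy1 hy3, eventually_ge_atTop 1] with d hq hd1
    obtain ⟨hq0, hq2⟩ := hq
    set q := y * Real.log d / d with hqdef
    have hdpos : (0:ℝ) < d := by exact_mod_cast hd1
    have h1q : (0:ℝ) < 1 - q := by linarith
    have hkey : (d:ℝ) * q = y * Real.log d := by
      rw [hqdef]; field_simp
    have hlow : -q / (1 - q) ≤ Real.log (1 - q) := by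
      have h := Real.log_le_sub_one_of_pos (x := (1-q)⁻¹) (by positivity)
      rw [Real.log_inv] at h
      have e : (1-q)⁻¹ - 1 = q / (1-q) := by field_simp; ring
      rw [neg_div]
      linarith [h, e.le, e.ge]
    have hlow2 : -q - 2 * q^2 ≤ Real.log (1 - q) := by
      have h1 : -q - 2*q^2 ≤ -q / (1-q) := by
        rw [le_div_iff₀ h1q]; nlinarith
      linarith
    have hq2' : (d:ℝ) * q^2 = y^2 * (Real.log d)^2 / d := by
      rw [hqdef]; field_simp
    have h2 := mul_le_mul_of_nonneg_left hlow2 hdpos.le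
    have e1 : (d:ℝ) * (-q - 2*q^2) = -((d:ℝ)*q) - 2*((d:ℝ)*q^2) := by ring
    have e3 : -(2 * y^2) * ((Real.log d)^2 / d) = -2*(y^2 * (Real.log d)^2 / d) := by ring
    linarith [h2, hkey, hq2', e1.le, e1.ge, e3.le, e3.ge]
  · filter_upwards [q_small y hy1 hy3, eventually_ge_atTop 1] with d hq hd1
    obtain ⟨hq0, hq2⟩ := hq
    set q := y * Real.log d / d with hqdef
    have hdpos : (0:ℝ) < d := by exact_mod_cast hd1
    have h1q : (0:ℝ) < 1 - q := by linarith
    have hkey : (d:ℝ) * q = y * Real.log d := by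
      rw [hqdef]; field_simp
    have hup : Real.log (1 - q) ≤ -q := by
      have := Real.log_le_sub_one_of_pos h1q
      linarith
    have h2 := mul_le_mul_of_nonneg_left hup hdpos.le
    have e1 : (d:ℝ) * (-q) = -((d:ℝ)*q) := by ring
    linarith [h2, hkey, e1.le, e1.ge]

lemma main_tendsto (y : ℝ) (hy1 : 1 ≤ y) (hy3 : y ≤ 3) :
    Tendsto (fun d : ℕ => (d:ℝ)^y * (1 - y * Real.log d / d) ^ d) atTop (nhds 1) := by
  have := (Real.continuous_exp.continuousAt (x := 0)).tendsto.comp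
    (exponent_tendsto y hy1 hy3)
  rw [Real.exp_zero] at this
  apply this.congr'
  filter_upwards [q_small y hy1 hy3, eventually_ge_atTop 1] with d hq hd1
  obtain ⟨hq0, hq2⟩ := hq
  have hdpos : (0:ℝ) < d := by exact_mod_cast hd1
  have h1q : (0:ℝ) < 1 - y * Real.log d / d := by linarith
  show Real.exp _ = _
  rw [Real.exp_add, Real.exp_nat_mul, Real.exp_log h1q,
    Real.rpow_def_of_pos hdpos, mul_comm (Real.log d) y]

theorem fugacity_asymptotics (y : ℝ) (hy1 : 1 ≤ y) (hy3 : y ≤ 3) :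
    Filter.Tendsto
      (fun d : ℕ =>
        ((y * Real.log d / d) *
            (1 - (1 - y * Real.log d / d) ^ (d - 1)) /
            (1 - y * Real.log d / d) ^ d) /
          ((d : ℝ) ^ (y - 1) * (y * Real.log d)))
      Filter.atTop (nhds 1) := by
  have hB : Tendsto (fun d : ℕ => (1 - y * Real.log d / d) ^ d) atTop (nhds 0) := by
    have hinv : Tendsto (fun d : ℕ => ((d:ℝ))^(-y)) atTop (nhds 0) :=
      (tendsto_rpow_neg_atTop (by linarith)).comp (tendsto_natCast_atTop_atTop (R := ℝ))
    have := (main_tendsto y hy1 hy3).mul hinv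
    rw [one_mul] at this
    apply this.congr'
    filter_upwards [eventually_ge_atTop 1] with d hd1
    have hdpos : (0:ℝ) < d := by exact_mod_cast hd1
    have e : (d:ℝ)^y * (d:ℝ)^(-y) = 1 := by
      rw [← Real.rpow_add hdpos]; simp
    rw [mul_comm ((d:ℝ)^y), mul_assoc, e, mul_one]
  have hA : Tendsto (fun d : ℕ => (1 - y * Real.log d / d) ^ (d - 1)) atTop (nhds 0) := by
    have hq : Tendsto (fun d : ℕ => 1 - y * Real.log d / d) atTop (nhds 1) := by
      have : Tendsto (fun d : ℕ => y * Real.log d / d) atTop (nhds 0) := by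
        have := log_div_tendsto.const_mul y
        rw [mul_zero] at this
        apply this.congr; intro d; rw [mul_div_assoc]
      simpa using tendsto_const_nhds.sub this
    have := hB.div hq one_ne_zero
    rw [zero_div] at this
    apply this.congr'
    filter_upwards [q_small y hy1 hy3, eventually_ge_atTop 1] with d hq' hd1
    have h1q : (0:ℝ) < 1 - y * Real.log d / d := by linarith [hq'.2]
    simp only [Pi.div_apply]
    rw [div_eq_iff h1q.ne', ← pow_succ, Nat.sub_add_cancel hd1]
  have hnum : Tendsto (fun d : ℕ => 1 - (1 - y * Real.log d / d) ^ (d - 1)) atTop (nhds 1) := by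
    simpa using tendsto_const_nhds.sub hA
  have := hnum.div (main_tendsto y hy1 hy3) one_ne_zero
  rw [div_one] at this
  apply this.congr'
  filter_upwards [q_small y hy1 hy3, eventually_ge_atTop 2] with d hq hd2
  obtain ⟨hq0, hq2⟩ := hq
  have hdpos : (0:ℝ) < d := by exact_mod_cast (by omega : 1 ≤ d)
  have h1q : (0:ℝ) < 1 - y * Real.log d / d := by linarith
  have hlog : 0 < Real.log d := Real.log_pos (by exact_mod_cast (by omega : 2 ≤ d))
  have hBne : (1 - y * Real.log d / d) ^ d ≠ 0 := pow_ne_zero _ h1q.ne'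
  have hyl : y * Real.log d ≠ 0 := by positivity
  have hdy : (d:ℝ) ^ (y - 1) = (d:ℝ) ^ y / d := by
    rw [Real.rpow_sub hdpos, Real.rpow_one]
  have hdyne : (d:ℝ) ^ y ≠ 0 := by positivity
  simp only [Pi.div_apply]
  rw [hdy]
  set A := (1 - y * Real.log d / d) ^ (d - 1) with hAdef
  set B := (1 - y * Real.log d / d) ^ d with hBdef
  set P := (d:ℝ) ^ y with hPdef
  field_simp
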